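/- Let W and W' be invertible K×K row-stochastic matrices. Then Φ(WW') ≥ Φ(W) holds entrywise, i.e. [Φ(WW')]_{k,ℓ} ≥ [Φ(W)]_{k,ℓ} for all k, ℓ ∈ [K]; moreover equality holds in all K² entries if and only if W' is a permutation matrix. -/

import Mathlib

open Finset Filter Asymptotics

namespace RRStmt

def simplex (K : ℕ) : Set (Fin K → ℝ) :=
  {p | (∀ k, 0 ≤ p k) ∧ ∑ k, p k = 1}

def simplexBoundary (K : ℕ) : Set (Fin K → ℝ) :=
  {p | p ∈ simplex K ∧ ∃ k, p k = 0}

/-- Kullback–Leibler divergence between two vectors on `Fin K`. -/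
noncomputable def KL {K : ℕ} (u v : Fin K → ℝ) : ℝ :=
  ∑ k, u k * Real.log (u k / v k)

/-- Boundary information projection `D(∂ℙW ‖ pW)`. -/
noncomputable def Dbnd {K : ℕ} (p : Fin K → ℝ) (W : Matrix (Fin K) (Fin K) ℝ) : ℝ :=
  sInf ((fun r => KL (Matrix.vecMul r W) (Matrix.vecMul p W)) '' simplexBoundary K)

/-- Empirical distribution (type) of a sample sequence. -/
noncomputable def empDist {K n : ℕ} (y : Fin n → Fin K) : Fin K → ℝ :=
  fun k => ((Finset.univ.filter fun i => y i = k).card : ℝ) / n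

/-- Expectation of `g` under `n` i.i.d. samples with distribution `q`. -/
noncomputable def iidE {K : ℕ} (q : Fin K → ℝ) (n : ℕ) (g : (Fin n → Fin K) → ℝ) : ℝ :=
  ∑ y : Fin n → Fin K, (∏ i, q (y i)) * g y

open Classical in
/-- Probability of event `E` under `n` i.i.d. samples with distribution `q`. -/
noncomputable def iidP {K : ℕ} (q : Fin K → ℝ) (n : ℕ) (E : Set (Fin n → Fin K)) : ℝ :=
  ∑ y : Fin n → Fin K, if y ∈ E then ∏ i, q (y i) else 0

def RowStochastic {K : ℕ} (W : Matrix (Fin K) (Fin K) ℝ) : Prop :=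
  (∀ i j, 0 ≤ W i j) ∧ ∀ i, ∑ j, W i j = 1

def EpsPrivate {K : ℕ} (ε : ℝ) (W : Matrix (Fin K) (Fin K) ℝ) : Prop :=
  ∀ k k' l, W k l ≤ Real.exp ε * W k' l

def IsCirculant {K : ℕ} (W : Matrix (Fin K) (Fin K) ℝ) : Prop :=
  ∃ w : Fin K → ℝ, ∀ i j, W i j = w (j - i)

def IsPermMatrix {K : ℕ} (W : Matrix (Fin K) (Fin K) ℝ) : Prop :=
  ∃ σ : Equiv.Perm (Fin K), ∀ i j, W i j = if σ i = j then 1 else 0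

noncomputable def nu {K : ℕ} (p : Fin K → ℝ) (W : Matrix (Fin K) (Fin K) ℝ)
    (ρ : ℕ) (k : Fin K) : ℝ :=
  ∑ j, Matrix.vecMul p W j * (W⁻¹ j k) ^ ρ

noncomputable def Phi {K : ℕ} (W : Matrix (Fin K) (Fin K) ℝ) : Matrix (Fin K) (Fin K) ℝ :=
  W * Matrix.hadamard W⁻¹ W⁻¹

noncomputable def phiSum {K : ℕ} (W : Matrix (Fin K) (Fin K) ℝ) : ℝ :=
  ∑ k, ∑ l, Phi W k l

noncomputable def stepMech (K : ℕ) (ε : ℝ) : Matrix (Fin K) (Fin K) ℝ :=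
  Matrix.of fun i j => if i = j then Real.exp ε / (Real.exp ε + K - 1)
                       else 1 / (Real.exp ε + K - 1)


/-- data-processing inequality for `Φ`, with equality iff `W'` is a permutation. -/
theorem stmt_7 (K : ℕ) (hK : 2 ≤ K)
    (W W' : Matrix (Fin K) (Fin K) ℝ)
    (hW : RowStochastic W) (hW' : RowStochastic W')
    (hWinv : IsUnit W) (hW'inv : IsUnit W') :
    (∀ k l, Phi W k l ≤ Phi (W * W') k l) ∧
      ((∀ k l, Phi (W * W') k l = Phi W k l) ↔ IsPermMatrix W') := by
  classical
  have hdW : IsUnit W.det := (Matrix.isUnit_iff_isUnit_det W).mp hWinv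
  have hdW' : IsUnit W'.det := (Matrix.isUnit_iff_isUnit_det W').mp hW'inv
  have hAW : W⁻¹ * W = 1 := Matrix.nonsing_inv_mul W hdW
  have hW'B : W' * W'⁻¹ = 1 := Matrix.mul_nonsing_inv W' hdW'
  have hBW' : W'⁻¹ * W' = 1 := Matrix.nonsing_inv_mul W' hdW'
  set A := W⁻¹ with hA
  set B := W'⁻¹ with hB
  have hinv : (W * W')⁻¹ = B * A := Matrix.mul_inv_rev W W'
  have s1 : ∀ m l, ∑ j, W' m j * (B * A) j l = A m l := by
    intro m l
    have h : W' * (B * A) = A := by rw [← Matrix.mul_assoc, hW'B, Matrix.one_mul]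
    calc ∑ j, W' m j * (B * A) j l = (W' * (B * A)) m l := (Matrix.mul_apply).symm
      _ = A m l := by rw [h]
  have inner : ∀ m l, ∑ j, W' m j * ((B * A) j l * (B * A) j l)
      = A m l * A m l + ∑ j, W' m j * ((B * A) j l - A m l) ^ 2 := by
    intro m l
    have expand : ∀ j ∈ Finset.univ, W' m j * ((B * A) j l * (B * A) j l)
        = W' m j * ((B * A) j l - A m l) ^ 2
          + (2 * A m l) * (W' m j * (B * A) j l)
          - (A m l * A m l) * W' m j := by
      intro j _; ring
    rw [Finset.sum_congr rfl expand, Finset.sum_sub_distrib, Finset.sum_add_distrib,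
      ← Finset.mul_sum, ← Finset.mul_sum, s1 m l, hW'.2 m]
    ring
  have key : ∀ k l, Phi (W * W') k l
      = Phi W k l + ∑ m, W k m * (∑ j, W' m j * ((B * A) j l - A m l) ^ 2) := by
    intro k l
    have lhs : Phi (W * W') k l
        = ∑ j, (∑ m, W k m * W' m j) * ((B * A) j l * (B * A) j l) := by
      simp [Phi, hinv, Matrix.mul_apply, Matrix.hadamard]
    have rhs : Phi W k l = ∑ m, W k m * (A m l * A m l) := by
      simp [Phi, Matrix.mul_apply, Matrix.hadamard, hA]
    rw [lhs, rhs]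
    calc ∑ j, (∑ m, W k m * W' m j) * ((B * A) j l * (B * A) j l)
        = ∑ m, W k m * ∑ j, W' m j * ((B * A) j l * (B * A) j l) := by
          simp_rw [Finset.sum_mul, Finset.mul_sum]
          rw [Finset.sum_comm]
          exact Finset.sum_congr rfl fun m _ => Finset.sum_congr rfl fun j _ => by ring
      _ = ∑ m, W k m * (A m l * A m l + ∑ j, W' m j * ((B * A) j l - A m l) ^ 2) := by
          exact Finset.sum_congr rfl fun m _ => by rw [inner m l]
      _ = (∑ m, W k m * (A m l * A m l))
            + ∑ m, W k m * (∑ j, W' m j * ((B * A) j l - A m l) ^ 2) := by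
          simp_rw [mul_add]; exact Finset.sum_add_distrib
  have hVnn : ∀ m l, 0 ≤ ∑ j, W' m j * ((B * A) j l - A m l) ^ 2 :=
    fun m l => Finset.sum_nonneg fun j _ => mul_nonneg (hW'.1 m j) (sq_nonneg _)
  constructor
  · intro k l
    rw [key k l]
    exact le_add_of_nonneg_right
      (Finset.sum_nonneg fun m _ => mul_nonneg (hW.1 k m) (hVnn m l))
  constructor
  · -- equality ⇒ permutation
    intro heq
    have hsum0 : ∀ k l, ∑ m, W k m * (∑ j, W' m j * ((B * A) j l - A m l) ^ 2) = 0 := by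
      intro k l
      have := key k l
      rw [heq k l] at this
      linarith
    -- every column of W has a nonzero entry
    have hcol : ∀ m, ∃ k, W k m ≠ 0 := by
      intro m
      by_contra h
      push_neg at h
      have : W.det = 0 := Matrix.det_eq_zero_of_column_eq_zero m h
      exact hdW.ne_zero this
    have hV0 : ∀ m l, ∑ j, W' m j * ((B * A) j l - A m l) ^ 2 = 0 := by
      intro m l
      obtain ⟨k, hk⟩ := hcol m
      have hterm := (Finset.sum_eq_zero_iff_of_nonneg
        (fun m' _ => mul_nonneg (hW.1 k m') (hVnn m' l))).mp (hsum0 k l) m (Finset.mem_univ m)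
      rcases mul_eq_zero.mp hterm with h | h
      · exact absurd h hk
      · exact h
    have hMA : ∀ m j, W' m j ≠ 0 → ∀ l, (B * A) j l = A m l := by
      intro m j hj l
      have hterm := (Finset.sum_eq_zero_iff_of_nonneg
        (fun j' _ => mul_nonneg (hW'.1 m j') (sq_nonneg _))).mp (hV0 m l) j (Finset.mem_univ j)
      rcases mul_eq_zero.mp hterm with h | h
      · exact absurd h hj
      · have := sq_eq_zero_iff.mp h
        linarith
    -- if W' m j ≠ 0 then row j of B is the m-th standard basis vector
    have hBrow : ∀ m j, W' m j ≠ 0 → ∀ i, B j i = if m = i then 1 else 0 := by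
      intro m j hj i
      have h1 : (B * A * W) j i = (A * W) m i := by
        rw [Matrix.mul_apply, Matrix.mul_apply]
        exact Finset.sum_congr rfl fun l _ => by rw [hMA m j hj l]
      have h2 : B * A * W = B := by rw [Matrix.mul_assoc, hA, Matrix.nonsing_inv_mul W hdW, Matrix.mul_one]
      have h3 : A * W = 1 := hAW
      rw [h2, h3] at h1
      rw [h1, Matrix.one_apply]
    -- if W' m j ≠ 0 then row m of W' is the j-th standard basis vector
    have hrow : ∀ m j, W' m j ≠ 0 → ∀ j', W' m j' = if j = j' then 1 else 0 := by
      intro m j hj j'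
      have h1 : (B * W') j j' = W' m j' := by
        rw [Matrix.mul_apply]
        calc ∑ i, B j i * W' i j' = ∑ i, (if m = i then 1 else 0) * W' i j' := by
              exact Finset.sum_congr rfl fun i _ => by rw [hBrow m j hj i]
          _ = W' m j' := by simp
      rw [hBW'] at h1
      rw [← h1, Matrix.one_apply]
    -- choose nonzero entry in each row
    have hex : ∀ m, ∃ j, W' m j ≠ 0 := by
      intro m
      by_contra h
      push_neg at h
      have : ∑ j, W' m j = 0 := Finset.sum_eq_zero fun j _ => h j
      rw [hW'.2 m] at this
      norm_num at this
    choose f hf using hex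
    have hWf : ∀ m j', W' m j' = if f m = j' then 1 else 0 := fun m => hrow m (f m) (hf m)
    have hfinj : Function.Injective f := by
      intro m m' hmm'
      have h1 := hBrow m (f m) (hf m)
      have h2 := hBrow m' (f m') (hf m')
      rw [hmm'] at h1
      have := (h1 m').symm.trans (h2 m')
      simpa using this
    refine ⟨Equiv.ofBijective f ((Finite.injective_iff_bijective).mp hfinj), ?_⟩
    intro i j
    exact hWf i j
  · -- permutation ⇒ equality
    rintro ⟨σ, hσ⟩ k l
    have hBE : B = Matrix.of fun i j => if σ j = i then (1 : ℝ) else 0 := by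
      rw [hB]
      apply Matrix.inv_eq_right_inv
      ext m i
      simp only [Matrix.mul_apply, hσ, Matrix.of_apply, Matrix.one_apply]
      rw [Finset.sum_eq_single (σ m)]
      · simp [σ.injective.eq_iff, eq_comm]
      · intro j _ hj; rw [if_neg (Ne.symm hj), zero_mul]
      · intro h; exact absurd (Finset.mem_univ _) h
    have hMσ : ∀ m l', (B * A) (σ m) l' = A m l' := by
      intro m l'
      rw [Matrix.mul_apply]
      calc ∑ i, B (σ m) i * A i l'
          = ∑ i, (if i = m then 1 else 0) * A i l' := by
            refine Finset.sum_congr rfl fun i _ => ?_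
            rw [hBE]
            simp [Matrix.of_apply, σ.injective.eq_iff]
        _ = A m l' := by simp
    have hV0 : ∀ m, ∑ j, W' m j * ((B * A) j l - A m l) ^ 2 = 0 := by
      intro m
      rw [Finset.sum_eq_single (σ m)]
      · rw [hMσ m l]; ring
      · intro j _ hj; rw [hσ, if_neg (Ne.symm hj), zero_mul]
      · intro h; exact absurd (Finset.mem_univ _) h
    rw [key k l]
    simp only [hV0, mul_zero]
    simp

end RRStmt
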